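/- arXiv:2004.06944 — 5 statements merged into one kernel-verified Lean document; each statement's English description precedes it below -/
import Mathlib

section
/- Let J and K be skew-symmetric real N×N matrices, let S : ℝᴺ → ℝ be continuously differentiable, and let Z : ℝ² × ℝ → ℝᴺ be a smooth (C²) map, 2π-periodic in its third argument s, such that for every (x,y,s) one has J·∂_x Z + K·∂_y Z = ∇S(Z) (a loop of steady solutions of the multisymplectic system). Define the fluxes B(x,y) = (1/2π)∫₀^{2π} ½⟨J·∂_s Z, Z⟩ ds and A(x,y) = (1/2π)∫₀^{2π} ½⟨K·∂_s Z, Z⟩ ds. Then ∂_x B + ∂_y A = 0 at every point (x,y); i.e., loops of steady solutions carry an exact planar conservation law. -/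
open RealInnerProductSpace Matrix Set MeasureTheory intervalIntegral

lemma skewInner {N : ℕ} (M : Matrix (Fin N) (Fin N) ℝ) (hM : Mᵀ = -M)
    (a b : EuclideanSpace ℝ (Fin N)) :
    ⟪Matrix.toEuclideanLin M a, b⟫ = -⟪a, Matrix.toEuclideanLin M b⟫ := by
  have hMab : ∀ i j, M j i = -M i j := by
    intro i j
    have := congrFun (congrFun hM i) j
    simpa [Matrix.transpose_apply] using this
  simp only [PiLp.inner_apply, RCLike.inner_apply, conj_trivial,
    Matrix.toEuclideanLin_apply, Matrix.mulVec, dotProduct]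
  simp only [Finset.sum_mul, Finset.mul_sum, ← Finset.sum_neg_distrib]
  rw [Finset.sum_comm]
  refine Finset.sum_congr rfl fun i _ => Finset.sum_congr rfl fun j _ => ?_
  rw [hMab j i]; ring

lemma derivUnderIntegral (f f' : ℝ → ℝ → ℝ)
    (hcont : Continuous fun p : ℝ × ℝ => f p.1 p.2)
    (hcont' : Continuous fun p : ℝ × ℝ => f' p.1 p.2)
    (hd : ∀ x s, HasDerivAt (fun x' => f x' s) (f' x s) x)
    (a b x₀ : ℝ) :
    HasDerivAt (fun x => ∫ s in a..b, f x s) (∫ s in a..b, f' x₀ s) x₀ := by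
  have hcomp : IsCompact (Metric.closedBall x₀ 1 ×ˢ uIcc a b) :=
    (isCompact_closedBall x₀ 1).prod isCompact_uIcc
  obtain ⟨C, hC⟩ := hcomp.exists_bound_of_continuousOn hcont'.continuousOn
  refine (intervalIntegral.hasDerivAt_integral_of_dominated_loc_of_deriv_le
    (F := fun x s => f x s) (F' := fun x s => f' x s) (bound := fun _ => C)
    (Metric.ball_mem_nhds x₀ one_pos) ?_ ?_ ?_ ?_ ?_ ?_).2
  · exact Filter.Eventually.of_forall fun x =>
      ((hcont.comp (continuous_const.prodMk continuous_id)).aestronglyMeasurable)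
  · exact (hcont.comp (continuous_const.prodMk continuous_id)).intervalIntegrable a b
  · exact (hcont'.comp (continuous_const.prodMk continuous_id)).aestronglyMeasurable
  · refine Filter.Eventually.of_forall fun t ht x hx => hC (x, t) ?_
    exact ⟨Metric.ball_subset_closedBall hx, uIoc_subset_uIcc ht⟩
  · exact intervalIntegrable_const
  · exact Filter.Eventually.of_forall fun t _ x _ => hd x t

set_option maxHeartbeats 2000000 in
theorem stmt6 (N : ℕ) (J K : Matrix (Fin N) (Fin N) ℝ)
    (hJ : Jᵀ = -J) (hK : Kᵀ = -K)
    (S : EuclideanSpace ℝ (Fin N) → ℝ) (hS : ContDiff ℝ 1 S)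
    (Z : ℝ → ℝ → ℝ → EuclideanSpace ℝ (Fin N))
    (hZ : ContDiff ℝ 2 (fun p : ℝ × ℝ × ℝ => Z p.1 p.2.1 p.2.2))
    (hper : ∀ x y s : ℝ, Z x y (s + 2 * Real.pi) = Z x y s)
    (heq : ∀ x y s : ℝ,
      Matrix.toEuclideanLin J (deriv (fun x' => Z x' y s) x)
        + Matrix.toEuclideanLin K (deriv (fun y' => Z x y' s) y)
        = gradient S (Z x y s)) :
    ∀ x y : ℝ,
      deriv (fun x' => (1 / (2 * Real.pi)) * ∫ s in (0:ℝ)..(2 * Real.pi),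
          (1 / 2 : ℝ) * ⟪Matrix.toEuclideanLin J (deriv (fun s' => Z x' y s') s), Z x' y s⟫) x
      + deriv (fun y' => (1 / (2 * Real.pi)) * ∫ s in (0:ℝ)..(2 * Real.pi),
          (1 / 2 : ℝ) * ⟪Matrix.toEuclideanLin K (deriv (fun s' => Z x y' s') s), Z x y' s⟫) y
      = 0 := by
  intro x y
  set F : ℝ × ℝ × ℝ → EuclideanSpace ℝ (Fin N) := fun p => Z p.1 p.2.1 p.2.2 with hFdef
  have hF2 : ContDiff ℝ 2 F := hZ
  have hF1 : ContDiff ℝ 1 F := hF2.of_le one_le_two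
  have hFd : Differentiable ℝ F := hF1.differentiable one_ne_zero
  set DF := fderiv ℝ F with hDFdef
  have hDF1 : ContDiff ℝ 1 DF := hF2.fderiv_right (by norm_num)
  have hDFd : Differentiable ℝ DF := hDF1.differentiable one_ne_zero
  set DDF := fderiv ℝ DF with hDDFdef
  have hDDF0 : ContDiff ℝ 0 DDF := hDF1.fderiv_right (by norm_num)
  set e1 : ℝ × ℝ × ℝ := (1, 0, 0) with he1
  set e2 : ℝ × ℝ × ℝ := (0, 1, 0) with he2
  set e3 : ℝ × ℝ × ℝ := (0, 0, 1) with he3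
  -- coordinate lines
  have lineX : ∀ a b c : ℝ, HasDerivAt (fun t => ((t, b, c) : ℝ × ℝ × ℝ)) e1 a :=
    fun a b c => (hasDerivAt_id a).prodMk (hasDerivAt_const a (b, c))
  have lineY : ∀ a b c : ℝ, HasDerivAt (fun t => ((a, t, c) : ℝ × ℝ × ℝ)) e2 b :=
    fun a b c => (hasDerivAt_const b a).prodMk ((hasDerivAt_id b).prodMk (hasDerivAt_const b c))
  have lineZ : ∀ a b c : ℝ, HasDerivAt (fun t => ((a, b, t) : ℝ × ℝ × ℝ)) e3 c :=
    fun a b c => (hasDerivAt_const c a).prodMk ((hasDerivAt_const c b).prodMk (hasDerivAt_id c))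
  -- first partial derivatives
  have hZx : ∀ a b c : ℝ, HasDerivAt (fun t => Z t b c) (DF (a, b, c) e1) a := by
    intro a b c
    simpa [F, Function.comp_def] using
      ((hFd (a, b, c)).hasFDerivAt.comp_hasDerivAt a (lineX a b c))
  have hZy : ∀ a b c : ℝ, HasDerivAt (fun t => Z a t c) (DF (a, b, c) e2) b := by
    intro a b c
    simpa [F, Function.comp_def] using
      ((hFd (a, b, c)).hasFDerivAt.comp_hasDerivAt b (lineY a b c))
  have hZs : ∀ a b c : ℝ, HasDerivAt (fun t => Z a b t) (DF (a, b, c) e3) c := by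
    intro a b c
    simpa [F, Function.comp_def] using
      ((hFd (a, b, c)).hasFDerivAt.comp_hasDerivAt c (lineZ a b c))
  -- second derivatives along coordinate lines
  have hDv : ∀ (p : ℝ × ℝ × ℝ) (v : ℝ × ℝ × ℝ),
      HasFDerivAt (fun q => DF q v)
        ((ContinuousLinearMap.apply ℝ (EuclideanSpace ℝ (Fin N)) v).comp (DDF p)) p := by
    intro p v
    exact (ContinuousLinearMap.apply ℝ (EuclideanSpace ℝ (Fin N)) v).hasFDerivAt.comp p (hDFd p).hasFDerivAt
  have hDvx : ∀ (a b c : ℝ) (v : ℝ × ℝ × ℝ),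
      HasDerivAt (fun t => DF (t, b, c) v) (DDF (a, b, c) e1 v) a := by
    intro a b c v
    simpa [Function.comp_def] using ((hDv (a, b, c) v).comp_hasDerivAt a (lineX a b c))
  have hDvy : ∀ (a b c : ℝ) (v : ℝ × ℝ × ℝ),
      HasDerivAt (fun t => DF (a, t, c) v) (DDF (a, b, c) e2 v) b := by
    intro a b c v
    simpa [Function.comp_def] using ((hDv (a, b, c) v).comp_hasDerivAt b (lineY a b c))
  have hDvs : ∀ (a b c : ℝ) (v : ℝ × ℝ × ℝ),
      HasDerivAt (fun t => DF (a, b, t) v) (DDF (a, b, c) e3 v) c := by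
    intro a b c v
    simpa [Function.comp_def] using ((hDv (a, b, c) v).comp_hasDerivAt c (lineZ a b c))
  -- symmetry of second derivative
  have hsym : ∀ (p : ℝ × ℝ × ℝ) (v w : ℝ × ℝ × ℝ), DDF p v w = DDF p w v := by
    intro p v w
    exact (hF2.contDiffAt).isSymmSndFDerivAt (by norm_num) v w
  -- matrices as continuous linear maps
  set Jc : EuclideanSpace ℝ (Fin N) →L[ℝ] EuclideanSpace ℝ (Fin N) :=
    LinearMap.toContinuousLinearMap (Matrix.toEuclideanLin J) with hJcdef
  set Kc : EuclideanSpace ℝ (Fin N) →L[ℝ] EuclideanSpace ℝ (Fin N) :=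
    LinearMap.toContinuousLinearMap (Matrix.toEuclideanLin K) with hKcdef
  have hJcapp : ∀ z, Jc z = Matrix.toEuclideanLin J z := fun z => rfl
  have hKcapp : ∀ z, Kc z = Matrix.toEuclideanLin K z := fun z => rfl
  have hJskew : ∀ a b : EuclideanSpace ℝ (Fin N), ⟪Jc a, b⟫ = -⟪a, Jc b⟫ := by
    intro a b; rw [hJcapp, hJcapp]; exact skewInner J hJ a b
  have hKskew : ∀ a b : EuclideanSpace ℝ (Fin N), ⟪Kc a, b⟫ = -⟪a, Kc b⟫ := by
    intro a b; rw [hKcapp, hKcapp]; exact skewInner K hK a b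
  -- gradient facts
  have hSd : Differentiable ℝ S := hS.differentiable one_ne_zero
  have hSgrad : ∀ z v, ⟪gradient S z, v⟫ = fderiv ℝ S z v := fun z v =>
    InnerProductSpace.toDual_symm_apply
  -- partial derivative functions
  set Zxf : ℝ × ℝ × ℝ → EuclideanSpace ℝ (Fin N) := fun p => DF p e1 with hZxfdef
  set Zyf : ℝ × ℝ × ℝ → EuclideanSpace ℝ (Fin N) := fun p => DF p e2 with hZyfdef
  set Zsf : ℝ × ℝ × ℝ → EuclideanSpace ℝ (Fin N) := fun p => DF p e3 with hZsfdef
  have hZxf1 : ContDiff ℝ 1 Zxf := hDF1.clm_apply contDiff_const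
  have hZyf1 : ContDiff ℝ 1 Zyf := hDF1.clm_apply contDiff_const
  have hZsf1 : ContDiff ℝ 1 Zsf := hDF1.clm_apply contDiff_const
  -- the integrands and their partial derivatives
  set G1 : ℝ × ℝ × ℝ → ℝ := fun p => (1/2 : ℝ) * ⟪Jc (Zsf p), F p⟫ with hG1def
  set G2 : ℝ × ℝ × ℝ → ℝ := fun p => (1/2 : ℝ) * ⟪Kc (Zsf p), F p⟫ with hG2def
  set G1x : ℝ × ℝ × ℝ → ℝ :=
    fun p => (1/2 : ℝ) * (⟪Jc (Zsf p), Zxf p⟫ + ⟪Jc (DDF p e1 e3), F p⟫) with hG1xdef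
  set G2y : ℝ × ℝ × ℝ → ℝ :=
    fun p => (1/2 : ℝ) * (⟪Kc (Zsf p), Zyf p⟫ + ⟪Kc (DDF p e2 e3), F p⟫) with hG2ydef
  have hG1deriv : ∀ a b c : ℝ, HasDerivAt (fun t => G1 (t, b, c)) (G1x (a, b, c)) a := by
    intro a b c
    have h1 : HasDerivAt (fun t => Jc (Zsf (t, b, c))) (Jc (DDF (a, b, c) e1 e3)) a := by
      simpa [Function.comp_def] using Jc.hasFDerivAt.comp_hasDerivAt a (hDvx a b c e3)
    have h3 := (HasDerivAt.inner ℝ h1 (hZx a b c)).const_mul (1/2 : ℝ)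
    simpa [hG1def, hG1xdef] using h3
  have hG2deriv : ∀ a b c : ℝ, HasDerivAt (fun t => G2 (a, t, c)) (G2y (a, b, c)) b := by
    intro a b c
    have h1 : HasDerivAt (fun t => Kc (Zsf (a, t, c))) (Kc (DDF (a, b, c) e2 e3)) b := by
      simpa [Function.comp_def] using Kc.hasFDerivAt.comp_hasDerivAt b (hDvy a b c e3)
    have h3 := (HasDerivAt.inner ℝ h1 (hZy a b c)).const_mul (1/2 : ℝ)
    simpa [hG2def, hG2ydef] using h3
  -- continuity
  have hDDapp : ∀ v w : ℝ × ℝ × ℝ, Continuous fun p : ℝ × ℝ × ℝ => DDF p v w :=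
    fun v w => ((hDDF0.clm_apply contDiff_const).clm_apply contDiff_const).continuous
  have hG1cont : Continuous G1 :=
    continuous_const.mul ((Jc.continuous.comp hZsf1.continuous).inner hF1.continuous)
  have hG2cont : Continuous G2 :=
    continuous_const.mul ((Kc.continuous.comp hZsf1.continuous).inner hF1.continuous)
  have hG1xcont : Continuous G1x :=
    continuous_const.mul (((Jc.continuous.comp hZsf1.continuous).inner hZxf1.continuous).add
      ((Jc.continuous.comp (hDDapp e1 e3)).inner hF1.continuous))
  have hG2ycont : Continuous G2y :=
    continuous_const.mul (((Kc.continuous.comp hZsf1.continuous).inner hZyf1.continuous).add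
      ((Kc.continuous.comp (hDDapp e2 e3)).inner hF1.continuous))
  -- differentiation under the integral sign
  have hlx : Continuous fun q : ℝ × ℝ => ((q.1, y, q.2) : ℝ × ℝ × ℝ) :=
    continuous_fst.prodMk (continuous_const.prodMk continuous_snd)
  have hly : Continuous fun q : ℝ × ℝ => ((x, q.1, q.2) : ℝ × ℝ × ℝ) :=
    continuous_const.prodMk (continuous_fst.prodMk continuous_snd)
  have hBx : HasDerivAt (fun x' => ∫ s in (0:ℝ)..(2*Real.pi), G1 (x', y, s))
      (∫ s in (0:ℝ)..(2*Real.pi), G1x (x, y, s)) x :=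
    derivUnderIntegral (fun x' s => G1 (x', y, s)) (fun x' s => G1x (x', y, s))
      (hG1cont.comp hlx) (hG1xcont.comp hlx) (fun a s => hG1deriv a y s) 0 (2*Real.pi) x
  have hAy : HasDerivAt (fun y' => ∫ s in (0:ℝ)..(2*Real.pi), G2 (x, y', s))
      (∫ s in (0:ℝ)..(2*Real.pi), G2y (x, y, s)) y :=
    derivUnderIntegral (fun y' s => G2 (x, y', s)) (fun y' s => G2y (x, y', s))
      (hG2cont.comp hly) (hG2ycont.comp hly) (fun b s => hG2deriv x b s) 0 (2*Real.pi) y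
  -- the statement's functions coincide with ours
  have hfunx : (fun x' => (1 / (2 * Real.pi)) * ∫ s in (0:ℝ)..(2 * Real.pi),
      (1 / 2 : ℝ) * ⟪Matrix.toEuclideanLin J (deriv (fun s' => Z x' y s') s), Z x' y s⟫)
      = fun x' => (1 / (2 * Real.pi)) * ∫ s in (0:ℝ)..(2 * Real.pi), G1 (x', y, s) := by
    funext x'
    congr 1
    refine intervalIntegral.integral_congr fun s _ => ?_
    rw [(hZs x' y s).deriv]
    simp [hG1def, hJcapp]
    rfl
  have hfuny : (fun y' => (1 / (2 * Real.pi)) * ∫ s in (0:ℝ)..(2 * Real.pi),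
      (1 / 2 : ℝ) * ⟪Matrix.toEuclideanLin K (deriv (fun s' => Z x y' s') s), Z x y' s⟫)
      = fun y' => (1 / (2 * Real.pi)) * ∫ s in (0:ℝ)..(2 * Real.pi), G2 (x, y', s) := by
    funext y'
    congr 1
    refine intervalIntegral.integral_congr fun s _ => ?_
    rw [(hZs x y' s).deriv]
    simp [hG2def, hKcapp]
    rfl
  rw [hfunx, hfuny, (hBx.const_mul (1/(2*Real.pi))).deriv, (hAy.const_mul (1/(2*Real.pi))).deriv]
  -- combine the integrals
  have hintG1x : IntervalIntegrable (fun s => G1x (x, y, s)) volume 0 (2*Real.pi) :=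
    (hG1xcont.comp (continuous_const.prodMk (continuous_const.prodMk
      continuous_id))).intervalIntegrable _ _
  have hintG2y : IntervalIntegrable (fun s => G2y (x, y, s)) volume 0 (2*Real.pi) :=
    (hG2ycont.comp (continuous_const.prodMk (continuous_const.prodMk
      continuous_id))).intervalIntegrable _ _
  rw [← mul_add, ← intervalIntegral.integral_add hintG1x hintG2y]
  -- the flux function H along s and its derivative
  set Hf : ℝ × ℝ × ℝ → ℝ := fun p =>
    (1/2 : ℝ) * ⟪Jc (Zxf p), F p⟫ + (1/2 : ℝ) * ⟪Kc (Zyf p), F p⟫ - S (F p) with hHfdef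
  set dH : ℝ × ℝ × ℝ → ℝ := fun p =>
    (1/2 : ℝ) * (⟪Jc (Zxf p), Zsf p⟫ + ⟪Jc (DDF p e3 e1), F p⟫)
    + (1/2 : ℝ) * (⟪Kc (Zyf p), Zsf p⟫ + ⟪Kc (DDF p e3 e2), F p⟫)
    - fderiv ℝ S (F p) (Zsf p) with hdHdef
  have hHderiv : ∀ c : ℝ, HasDerivAt (fun t => Hf (x, y, t)) (dH (x, y, c)) c := by
    intro c
    have h1 : HasDerivAt (fun t => Jc (Zxf (x, y, t))) (Jc (DDF (x, y, c) e3 e1)) c := by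
      simpa [Function.comp_def] using Jc.hasFDerivAt.comp_hasDerivAt c (hDvs x y c e1)
    have h2 : HasDerivAt (fun t => Kc (Zyf (x, y, t))) (Kc (DDF (x, y, c) e3 e2)) c := by
      simpa [Function.comp_def] using Kc.hasFDerivAt.comp_hasDerivAt c (hDvs x y c e2)
    have hi1 := (HasDerivAt.inner ℝ h1 (hZs x y c)).const_mul (1/2 : ℝ)
    have hi2 := (HasDerivAt.inner ℝ h2 (hZs x y c)).const_mul (1/2 : ℝ)
    have h4 : HasDerivAt (fun t => S (Z x y t)) (fderiv ℝ S (F (x, y, c)) (Zsf (x, y, c))) c := by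
      simpa [Function.comp_def] using
        (hSd (F (x, y, c))).hasFDerivAt.comp_hasDerivAt c (hZs x y c)
    have := (hi1.add hi2).sub h4
    exact this
  -- the key pointwise identity
  have hkey : ∀ c : ℝ, G1x (x, y, c) + G2y (x, y, c) = dH (x, y, c) := by
    intro c
    have hsx : DDF (x, y, c) e1 e3 = DDF (x, y, c) e3 e1 := hsym _ _ _
    have hsy : DDF (x, y, c) e2 e3 = DDF (x, y, c) e3 e2 := hsym _ _ _
    have hgr : Jc (Zxf (x, y, c)) + Kc (Zyf (x, y, c)) = gradient S (F (x, y, c)) := by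
      have h := heq x y c
      rw [(hZx x y c).deriv, (hZy x y c).deriv] at h
      rw [hJcapp, hKcapp]
      exact h
    have hfS : fderiv ℝ S (F (x, y, c)) (Zsf (x, y, c))
        = ⟪Jc (Zxf (x, y, c)), Zsf (x, y, c)⟫ + ⟪Kc (Zyf (x, y, c)), Zsf (x, y, c)⟫ := by
      rw [← hSgrad, ← hgr, inner_add_left]
    have s1 : ⟪Jc (Zsf (x, y, c)), Zxf (x, y, c)⟫ = -⟪Jc (Zxf (x, y, c)), Zsf (x, y, c)⟫ := by
      rw [hJskew, real_inner_comm]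
    have s2 : ⟪Kc (Zsf (x, y, c)), Zyf (x, y, c)⟫ = -⟪Kc (Zyf (x, y, c)), Zsf (x, y, c)⟫ := by
      rw [hKskew, real_inner_comm]
    simp only [hG1xdef, hG2ydef, hdHdef]
    rw [hsx, hsy, hfS, s1, s2]
    ring
  -- fundamental theorem of calculus and periodicity
  have hdHcont : Continuous fun s => dH (x, y, s) := by
    have hfS0 : ContDiff ℝ 0 (fderiv ℝ S) := hS.fderiv_right (by norm_num)
    have : Continuous dH := by
      refine ((continuous_const.mul (((Jc.continuous.comp hZxf1.continuous).inner
        hZsf1.continuous).add ((Jc.continuous.comp (hDDapp e3 e1)).inner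
        hF1.continuous))).add (continuous_const.mul (((Kc.continuous.comp
        hZyf1.continuous).inner hZsf1.continuous).add ((Kc.continuous.comp
        (hDDapp e3 e2)).inner hF1.continuous)))).sub ?_
      exact (((hfS0.comp (hF2.of_le zero_le)).clm_apply
        (hZsf1.of_le zero_le)).continuous)
    exact this.comp (continuous_const.prodMk (continuous_const.prodMk continuous_id))
  have hftc : ∫ s in (0:ℝ)..(2*Real.pi), dH (x, y, s) = Hf (x, y, 2*Real.pi) - Hf (x, y, 0) :=
    intervalIntegral.integral_eq_sub_of_hasDerivAt (fun t _ => hHderiv t)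
      (hdHcont.intervalIntegrable _ _)
  -- periodicity
  have hFper : F (x, y, 2*Real.pi) = F (x, y, 0) := by
    have := hper x y 0
    simpa using this
  have hZxper : Zxf (x, y, 2*Real.pi) = Zxf (x, y, 0) := by
    have e : (fun t => Z t y (2*Real.pi)) = fun t => Z t y 0 := by
      funext t
      have := hper t y 0
      simpa using this
    show DF (x, y, 2*Real.pi) e1 = DF (x, y, 0) e1
    rw [← (hZx x y (2*Real.pi)).deriv, ← (hZx x y 0).deriv, e]
  have hZyper : Zyf (x, y, 2*Real.pi) = Zyf (x, y, 0) := by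
    have e : (fun t => Z x t (2*Real.pi)) = fun t => Z x t 0 := by
      funext t
      have := hper x t 0
      simpa using this
    show DF (x, y, 2*Real.pi) e2 = DF (x, y, 0) e2
    rw [← (hZy x y (2*Real.pi)).deriv, ← (hZy x y 0).deriv, e]
  have hHper : Hf (x, y, 2*Real.pi) = Hf (x, y, 0) := by
    rw [hHfdef]
    simp only [hFper, hZxper, hZyper]
  have hzero : ∫ s in (0:ℝ)..(2*Real.pi), (G1x (x, y, s) + G2y (x, y, s)) = 0 := by
    rw [intervalIntegral.integral_congr (fun s _ => hkey s), hftc, hHper, sub_self]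
  rw [hzero, mul_zero]
end

section
/- Let J and K be skew-symmetric real N×N matrices, let S : ℝᴺ → ℝ be twice continuously differentiable, and let Ẑ : ℝ × ℝ² → ℝᴺ, (θ,k,l) ↦ Ẑ(θ,k,l), be a smooth (C²) map, 2π-periodic in θ, satisfying (k·J + l·K)·Ẑ_θ = ∇S(Ẑ) for all (θ,k,l) in an open set. Then for all (k,l) in that set, (1/2π)∫₀^{2π}⟨J·Ẑ_θ, Ẑ_l⟩dθ = (1/2π)∫₀^{2π}⟨K·Ẑ_θ, Ẑ_k⟩dθ; i.e., the cross derivatives of the flux functionals agree: B_l = A_k. -/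
open RealInnerProductSpace Matrix

private theorem skew_aux {N : ℕ} {A : Matrix (Fin N) (Fin N) ℝ} (hA : Aᵀ = -A)
    (x y : EuclideanSpace ℝ (Fin N)) :
    ⟪Matrix.toEuclideanLin A x, y⟫ = -⟪x, Matrix.toEuclideanLin A y⟫ := by
  have h1 := Matrix.toEuclideanLin_conjTranspose_eq_adjoint A
  have h2 : Aᴴ = -A := by
    rw [Matrix.conjTranspose_eq_transpose_of_trivial, hA]
  rw [h2] at h1
  have h3 := LinearMap.adjoint_inner_left (𝕜 := ℝ) (Matrix.toEuclideanLin A) y x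
  rw [← h1, map_neg, LinearMap.neg_apply, inner_neg_left] at h3
  linarith [h3]

set_option maxHeartbeats 1000000 in
theorem stmt9 (N : ℕ) (J K : Matrix (Fin N) (Fin N) ℝ)
    (hJ : Jᵀ = -J) (hK : Kᵀ = -K)
    (S : EuclideanSpace ℝ (Fin N) → ℝ) (hS : ContDiff ℝ 2 S)
    (U : Set (ℝ × ℝ)) (hU : IsOpen U)
    (Zh : ℝ → ℝ → ℝ → EuclideanSpace ℝ (Fin N))
    (hZ : ContDiff ℝ 2 (fun p : ℝ × ℝ × ℝ => Zh p.1 p.2.1 p.2.2))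
    (hper : ∀ θ k l : ℝ, Zh (θ + 2 * Real.pi) k l = Zh θ k l)
    (heq : ∀ θ k l : ℝ, (k, l) ∈ U →
      Matrix.toEuclideanLin (k • J + l • K) (deriv (fun θ' => Zh θ' k l) θ)
        = gradient S (Zh θ k l)) :
    ∀ k l : ℝ, (k, l) ∈ U →
      ((1 / (2 * Real.pi)) * ∫ θ in (0:ℝ)..(2 * Real.pi),
          ⟪Matrix.toEuclideanLin J (deriv (fun θ' => Zh θ' k l) θ),
            deriv (fun l' => Zh θ k l') l⟫)
        = (1 / (2 * Real.pi)) * ∫ θ in (0:ℝ)..(2 * Real.pi),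
            ⟪Matrix.toEuclideanLin K (deriv (fun θ' => Zh θ' k l) θ),
              deriv (fun k' => Zh θ k' l) k⟫ := by
  intro k l hkl
  set f : ℝ × ℝ × ℝ → EuclideanSpace ℝ (Fin N) := fun p => Zh p.1 p.2.1 p.2.2 with hfdef
  set e1 : ℝ × ℝ × ℝ := (1, 0, 0) with he1
  set e2 : ℝ × ℝ × ℝ := (0, 1, 0) with he2
  set e3 : ℝ × ℝ × ℝ := (0, 0, 1) with he3
  set JL : EuclideanSpace ℝ (Fin N) →L[ℝ] EuclideanSpace ℝ (Fin N) :=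
    LinearMap.toContinuousLinearMap (Matrix.toEuclideanLin J) with hJLdef
  set KL : EuclideanSpace ℝ (Fin N) →L[ℝ] EuclideanSpace ℝ (Fin N) :=
    LinearMap.toContinuousLinearMap (Matrix.toEuclideanLin K) with hKLdef
  have hJLapp : ∀ x, JL x = Matrix.toEuclideanLin J x := fun x => rfl
  have hKLapp : ∀ x, KL x = Matrix.toEuclideanLin K x := fun x => rfl
  have hfd : Differentiable ℝ f := hZ.differentiable (by norm_num)
  have hf1 : ContDiff ℝ 1 (fderiv ℝ f) := hZ.fderiv_right (by norm_num)
  have hf1d : Differentiable ℝ (fderiv ℝ f) := hf1.differentiable (by norm_num)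
  have hf2c : Continuous (fderiv ℝ (fderiv ℝ f)) := hf1.continuous_fderiv (by norm_num)
  have hfc1 : Continuous (fderiv ℝ f) := hf1.continuous
  -- first order curve derivatives
  have hθ : ∀ θ' k' l' : ℝ, HasDerivAt (fun t => Zh t k' l')
      (fderiv ℝ f (θ', k', l') e1) θ' := by
    intro θ' k' l'
    have hc : HasDerivAt (fun t : ℝ => ((t, k', l') : ℝ × ℝ × ℝ)) e1 θ' :=
      HasDerivAt.prodMk (hasDerivAt_id θ') (HasDerivAt.prodMk (hasDerivAt_const θ' k') (hasDerivAt_const θ' l'))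
    exact (hfd _).hasFDerivAt.comp_hasDerivAt θ' hc
  have hk : ∀ θ' k' l' : ℝ, HasDerivAt (fun t => Zh θ' t l')
      (fderiv ℝ f (θ', k', l') e2) k' := by
    intro θ' k' l'
    have hc : HasDerivAt (fun t : ℝ => ((θ', t, l') : ℝ × ℝ × ℝ)) e2 k' :=
      HasDerivAt.prodMk (hasDerivAt_const k' θ') (HasDerivAt.prodMk (hasDerivAt_id k') (hasDerivAt_const k' l'))
    exact (hfd _).hasFDerivAt.comp_hasDerivAt k' hc
  have hl : ∀ θ' k' l' : ℝ, HasDerivAt (fun t => Zh θ' k' t)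
      (fderiv ℝ f (θ', k', l') e3) l' := by
    intro θ' k' l'
    have hc : HasDerivAt (fun t : ℝ => ((θ', k', t) : ℝ × ℝ × ℝ)) e3 l' :=
      HasDerivAt.prodMk (hasDerivAt_const l' θ') (HasDerivAt.prodMk (hasDerivAt_const l' k') (hasDerivAt_id l'))
    exact (hfd _).hasFDerivAt.comp_hasDerivAt l' hc
  -- second order: derivatives of directional derivatives
  have hDθ : ∀ (θ' : ℝ) (v : ℝ × ℝ × ℝ), HasDerivAt (fun t => fderiv ℝ f (t, k, l) v)
      (fderiv ℝ (fderiv ℝ f) (θ', k, l) e1 v) θ' := by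
    intro θ' v
    have hc : HasDerivAt (fun t : ℝ => ((t, k, l) : ℝ × ℝ × ℝ)) e1 θ' :=
      HasDerivAt.prodMk (hasDerivAt_id θ') (HasDerivAt.prodMk (hasDerivAt_const θ' k) (hasDerivAt_const θ' l))
    have h1 : HasDerivAt (fun t : ℝ => fderiv ℝ f (t, k, l))
        (fderiv ℝ (fderiv ℝ f) (θ', k, l) e1) θ' :=
      (hf1d _).hasFDerivAt.comp_hasDerivAt θ' hc
    simpa using h1.clm_apply (hasDerivAt_const θ' v)
  have hDk : ∀ (θ' : ℝ) (v : ℝ × ℝ × ℝ), HasDerivAt (fun t => fderiv ℝ f (θ', t, l) v)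
      (fderiv ℝ (fderiv ℝ f) (θ', k, l) e2 v) k := by
    intro θ' v
    have hc : HasDerivAt (fun t : ℝ => ((θ', t, l) : ℝ × ℝ × ℝ)) e2 k :=
      HasDerivAt.prodMk (hasDerivAt_const k θ') (HasDerivAt.prodMk (hasDerivAt_id k) (hasDerivAt_const k l))
    have h1 : HasDerivAt (fun t : ℝ => fderiv ℝ f (θ', t, l))
        (fderiv ℝ (fderiv ℝ f) (θ', k, l) e2) k :=
      (hf1d _).hasFDerivAt.comp_hasDerivAt k hc
    simpa using h1.clm_apply (hasDerivAt_const k v)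
  have hDl : ∀ (θ' : ℝ) (v : ℝ × ℝ × ℝ), HasDerivAt (fun t => fderiv ℝ f (θ', k, t) v)
      (fderiv ℝ (fderiv ℝ f) (θ', k, l) e3 v) l := by
    intro θ' v
    have hc : HasDerivAt (fun t : ℝ => ((θ', k, t) : ℝ × ℝ × ℝ)) e3 l :=
      HasDerivAt.prodMk (hasDerivAt_const l θ') (HasDerivAt.prodMk (hasDerivAt_const l k) (hasDerivAt_id l))
    have h1 : HasDerivAt (fun t : ℝ => fderiv ℝ f (θ', k, t))
        (fderiv ℝ (fderiv ℝ f) (θ', k, l) e3) l :=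
      (hf1d _).hasFDerivAt.comp_hasDerivAt l hc
    simpa using h1.clm_apply (hasDerivAt_const l v)
  -- Clairaut
  have hsymm : ∀ (p u v : ℝ × ℝ × ℝ),
      fderiv ℝ (fderiv ℝ f) p u v = fderiv ℝ (fderiv ℝ f) p v u :=
    fun p u v => second_derivative_symmetric (fun y => (hfd y).hasFDerivAt)
      ((hf1d p).hasFDerivAt) u v
  -- gradient facts
  have hSd : Differentiable ℝ S := hS.differentiable (by norm_num)
  have hS1d : Differentiable ℝ (fderiv ℝ S) :=
    (hS.fderiv_right (m := 1) (by norm_num)).differentiable (by norm_num)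
  have hgradc : ∀ (y : EuclideanSpace ℝ (Fin N)) (c : EuclideanSpace ℝ (Fin N)),
      ⟪gradient S y, c⟫ = fderiv ℝ S y c := fun y c => InnerProductSpace.toDual_symm_apply
  have hS2symm : ∀ x u v, fderiv ℝ (fderiv ℝ S) x u v = fderiv ℝ (fderiv ℝ S) x v u :=
    fun x u v => second_derivative_symmetric (fun y => (hSd y).hasFDerivAt)
      ((hS1d x).hasFDerivAt) u v
  -- the pattern equation in decomposed form
  have hMdecomp : ∀ (a b : ℝ) (x : EuclideanSpace ℝ (Fin N)),
      Matrix.toEuclideanLin (a • J + b • K) x = a • JL x + b • KL x := by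
    intro a b x
    simp [hJLapp, hKLapp, Matrix.toEuclideanLin_apply, Matrix.add_mulVec, Matrix.smul_mulVec]
  have heqf : ∀ (θ' k' l' : ℝ), (k', l') ∈ U →
      k' • JL (fderiv ℝ f (θ', k', l') e1) + l' • KL (fderiv ℝ f (θ', k', l') e1)
        = gradient S (Zh θ' k' l') := by
    intro θ' k' l' h
    have h0 := heq θ' k' l' h
    rw [(hθ θ' k' l').deriv, hMdecomp] at h0
    exact h0
  -- differentiating the equation in k
  have key_k : ∀ (θ' : ℝ) (c : EuclideanSpace ℝ (Fin N)),
      ⟪k • JL (fderiv ℝ (fderiv ℝ f) (θ', k, l) e2 e1) + JL (fderiv ℝ f (θ', k, l) e1)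
          + l • KL (fderiv ℝ (fderiv ℝ f) (θ', k, l) e2 e1), c⟫
        = fderiv ℝ (fderiv ℝ S) (Zh θ' k l) (fderiv ℝ f (θ', k, l) e2) c := by
    intro θ' c
    have hw : HasDerivAt (fun t => fderiv ℝ f (θ', t, l) e1)
        (fderiv ℝ (fderiv ℝ f) (θ', k, l) e2 e1) k := hDk θ' e1
    have hJw : HasDerivAt (fun t => JL (fderiv ℝ f (θ', t, l) e1))
        (JL (fderiv ℝ (fderiv ℝ f) (θ', k, l) e2 e1)) k := JL.hasFDerivAt.comp_hasDerivAt k hw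
    have hKw : HasDerivAt (fun t => KL (fderiv ℝ f (θ', t, l) e1))
        (KL (fderiv ℝ (fderiv ℝ f) (θ', k, l) e2 e1)) k := KL.hasFDerivAt.comp_hasDerivAt k hw
    have hφ1 : HasDerivAt (fun t => t • JL (fderiv ℝ f (θ', t, l) e1))
        (k • JL (fderiv ℝ (fderiv ℝ f) (θ', k, l) e2 e1) + JL (fderiv ℝ f (θ', k, l) e1)) k := by
      exact ((hasDerivAt_id k).smul hJw).congr_deriv (by simp)
    have hφ2 : HasDerivAt (fun t => l • KL (fderiv ℝ f (θ', t, l) e1))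
        (l • KL (fderiv ℝ (fderiv ℝ f) (θ', k, l) e2 e1)) k := hKw.const_smul l
    have hφ := hφ1.add hφ2
    have hφc : HasDerivAt
        (fun t => ⟪t • JL (fderiv ℝ f (θ', t, l) e1) + l • KL (fderiv ℝ f (θ', t, l) e1), c⟫)
        ⟪k • JL (fderiv ℝ (fderiv ℝ f) (θ', k, l) e2 e1) + JL (fderiv ℝ f (θ', k, l) e1)
          + l • KL (fderiv ℝ (fderiv ℝ f) (θ', k, l) e2 e1), c⟫ k := by
      have := hφ.inner ℝ (hasDerivAt_const k c)
      simpa only [inner_zero_right, zero_add, add_assoc, Pi.add_apply] using this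
    -- the right-hand side, as a scalar function
    have hψc : HasDerivAt (fun t => fderiv ℝ S (Zh θ' t l) c)
        (fderiv ℝ (fderiv ℝ S) (Zh θ' k l) (fderiv ℝ f (θ', k, l) e2) c) k := by
      have h1 : HasDerivAt (fun t => fderiv ℝ S (Zh θ' t l))
          (fderiv ℝ (fderiv ℝ S) (Zh θ' k l) (fderiv ℝ f (θ', k, l) e2)) k :=
        (hS1d _).hasFDerivAt.comp_hasDerivAt k (hk θ' k l)
      simpa using h1.clm_apply (hasDerivAt_const k c)
    have hUk : {t : ℝ | (t, l) ∈ U} ∈ nhds k := by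
      have hcont : Continuous (fun t : ℝ => ((t, l) : ℝ × ℝ)) := by fun_prop
      exact hcont.continuousAt.preimage_mem_nhds (hU.mem_nhds hkl)
    have hev : (fun t => ⟪t • JL (fderiv ℝ f (θ', t, l) e1)
          + l • KL (fderiv ℝ f (θ', t, l) e1), c⟫)
        =ᶠ[nhds k] (fun t => fderiv ℝ S (Zh θ' t l) c) := by
      filter_upwards [hUk] with t ht
      rw [heqf θ' t l ht, hgradc]
    exact ((hφc.congr_of_eventuallyEq hev.symm).unique hψc).symm ▸ rfl
  -- differentiating the equation in l
  have key_l : ∀ (θ' : ℝ) (c : EuclideanSpace ℝ (Fin N)),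
      ⟪k • JL (fderiv ℝ (fderiv ℝ f) (θ', k, l) e3 e1)
          + (l • KL (fderiv ℝ (fderiv ℝ f) (θ', k, l) e3 e1) + KL (fderiv ℝ f (θ', k, l) e1)), c⟫
        = fderiv ℝ (fderiv ℝ S) (Zh θ' k l) (fderiv ℝ f (θ', k, l) e3) c := by
    intro θ' c
    have hw : HasDerivAt (fun t => fderiv ℝ f (θ', k, t) e1)
        (fderiv ℝ (fderiv ℝ f) (θ', k, l) e3 e1) l := hDl θ' e1
    have hJw : HasDerivAt (fun t => JL (fderiv ℝ f (θ', k, t) e1))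
        (JL (fderiv ℝ (fderiv ℝ f) (θ', k, l) e3 e1)) l := JL.hasFDerivAt.comp_hasDerivAt l hw
    have hKw : HasDerivAt (fun t => KL (fderiv ℝ f (θ', k, t) e1))
        (KL (fderiv ℝ (fderiv ℝ f) (θ', k, l) e3 e1)) l := KL.hasFDerivAt.comp_hasDerivAt l hw
    have hφ1 : HasDerivAt (fun t => k • JL (fderiv ℝ f (θ', k, t) e1))
        (k • JL (fderiv ℝ (fderiv ℝ f) (θ', k, l) e3 e1)) l := hJw.const_smul k
    have hφ2 : HasDerivAt (fun t => t • KL (fderiv ℝ f (θ', k, t) e1))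
        (l • KL (fderiv ℝ (fderiv ℝ f) (θ', k, l) e3 e1) + KL (fderiv ℝ f (θ', k, l) e1)) l := by
      exact ((hasDerivAt_id l).smul hKw).congr_deriv (by simp)
    have hφ := hφ1.add hφ2
    have hφc : HasDerivAt
        (fun t => ⟪k • JL (fderiv ℝ f (θ', k, t) e1) + t • KL (fderiv ℝ f (θ', k, t) e1), c⟫)
        ⟪k • JL (fderiv ℝ (fderiv ℝ f) (θ', k, l) e3 e1)
          + (l • KL (fderiv ℝ (fderiv ℝ f) (θ', k, l) e3 e1)
            + KL (fderiv ℝ f (θ', k, l) e1)), c⟫ l := by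
      have := hφ.inner ℝ (hasDerivAt_const l c)
      simpa only [inner_zero_right, zero_add, Pi.add_apply] using this
    have hψc : HasDerivAt (fun t => fderiv ℝ S (Zh θ' k t) c)
        (fderiv ℝ (fderiv ℝ S) (Zh θ' k l) (fderiv ℝ f (θ', k, l) e3) c) l := by
      have h1 : HasDerivAt (fun t => fderiv ℝ S (Zh θ' k t))
          (fderiv ℝ (fderiv ℝ S) (Zh θ' k l) (fderiv ℝ f (θ', k, l) e3)) l :=
        (hS1d _).hasFDerivAt.comp_hasDerivAt l (hl θ' k l)
      simpa using h1.clm_apply (hasDerivAt_const l c)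
    have hUl : {t : ℝ | (k, t) ∈ U} ∈ nhds l := by
      have hcont : Continuous (fun t : ℝ => ((k, t) : ℝ × ℝ)) := by fun_prop
      exact hcont.continuousAt.preimage_mem_nhds (hU.mem_nhds hkl)
    have hev : (fun t => ⟪k • JL (fderiv ℝ f (θ', k, t) e1)
          + t • KL (fderiv ℝ f (θ', k, t) e1), c⟫)
        =ᶠ[nhds l] (fun t => fderiv ℝ S (Zh θ' k t) c) := by
      filter_upwards [hUl] with t ht
      rw [heqf θ' k t ht, hgradc]
    exact (hφc.congr_of_eventuallyEq hev.symm).unique hψc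
  -- skew-symmetry in inner-product form
  have sJ : ∀ x y : EuclideanSpace ℝ (Fin N), ⟪JL x, y⟫ = -⟪JL y, x⟫ := by
    intro x y; rw [hJLapp, hJLapp, skew_aux hJ, real_inner_comm]
  have sK : ∀ x y : EuclideanSpace ℝ (Fin N), ⟪KL x, y⟫ = -⟪KL y, x⟫ := by
    intro x y; rw [hKLapp, hKLapp, skew_aux hK, real_inner_comm]
  -- the boundary-term function
  set Gf : ℝ → ℝ := fun t =>
    ⟪k • JL (fderiv ℝ f (t, k, l) e3) + l • KL (fderiv ℝ f (t, k, l) e3),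
      fderiv ℝ f (t, k, l) e2⟫ with hGdef
  have hgder : ∀ t : ℝ, HasDerivAt Gf
      (⟪k • JL (fderiv ℝ f (t, k, l) e3) + l • KL (fderiv ℝ f (t, k, l) e3),
          fderiv ℝ (fderiv ℝ f) (t, k, l) e1 e2⟫
        + ⟪k • JL (fderiv ℝ (fderiv ℝ f) (t, k, l) e1 e3)
            + l • KL (fderiv ℝ (fderiv ℝ f) (t, k, l) e1 e3), fderiv ℝ f (t, k, l) e2⟫) t := by
    intro t
    have h3 := hDθ t e3
    have h2 := hDθ t e2
    have hM : HasDerivAt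
        (fun s => k • JL (fderiv ℝ f (s, k, l) e3) + l • KL (fderiv ℝ f (s, k, l) e3))
        (k • JL (fderiv ℝ (fderiv ℝ f) (t, k, l) e1 e3)
          + l • KL (fderiv ℝ (fderiv ℝ f) (t, k, l) e1 e3)) t :=
      ((JL.hasFDerivAt.comp_hasDerivAt t h3).const_smul k).add
        ((KL.hasFDerivAt.comp_hasDerivAt t h3).const_smul l)
    exact hM.inner ℝ h2
  -- pointwise identity: the integrand difference is the derivative of Gf
  have hIJK : ∀ t : ℝ,
      ⟪JL (fderiv ℝ f (t, k, l) e1), fderiv ℝ f (t, k, l) e3⟫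
        - ⟪KL (fderiv ℝ f (t, k, l) e1), fderiv ℝ f (t, k, l) e2⟫
      = ⟪k • JL (fderiv ℝ f (t, k, l) e3) + l • KL (fderiv ℝ f (t, k, l) e3),
          fderiv ℝ (fderiv ℝ f) (t, k, l) e1 e2⟫
        + ⟪k • JL (fderiv ℝ (fderiv ℝ f) (t, k, l) e1 e3)
            + l • KL (fderiv ℝ (fderiv ℝ f) (t, k, l) e1 e3), fderiv ℝ f (t, k, l) e2⟫ := by
    intro t
    have h1 := key_k t (fderiv ℝ f (t, k, l) e3)
    have h2 := key_l t (fderiv ℝ f (t, k, l) e2)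
    rw [hsymm (t, k, l) e2 e1] at h1
    rw [hsymm (t, k, l) e3 e1] at h2
    have hsym := hS2symm (Zh t k l) (fderiv ℝ f (t, k, l) e2) (fderiv ℝ f (t, k, l) e3)
    simp only [inner_add_left, real_inner_smul_left] at h1 h2 ⊢
    rw [sJ (fderiv ℝ f (t, k, l) e3) (fderiv ℝ (fderiv ℝ f) (t, k, l) e1 e2),
      sK (fderiv ℝ f (t, k, l) e3) (fderiv ℝ (fderiv ℝ f) (t, k, l) e1 e2)]
    linarith [h1, h2, hsym]
  -- periodicity of the first derivative
  have hDfper : ∀ p : ℝ × ℝ × ℝ,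
      fderiv ℝ f p = fderiv ℝ f (p + ((2 * Real.pi : ℝ), (0:ℝ), (0:ℝ))) := by
    intro p
    have hfp : (fun q : ℝ × ℝ × ℝ => f (q + ((2 * Real.pi : ℝ), (0:ℝ), (0:ℝ)))) = f := by
      funext q
      show Zh (q.1 + 2 * Real.pi) (q.2.1 + 0) (q.2.2 + 0) = Zh q.1 q.2.1 q.2.2
      rw [add_zero, add_zero, hper]
    have h1 : HasFDerivAt (fun q : ℝ × ℝ × ℝ => f (q + ((2 * Real.pi : ℝ), (0:ℝ), (0:ℝ))))
        (fderiv ℝ f (p + ((2 * Real.pi : ℝ), (0:ℝ), (0:ℝ)))) p := by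
      simpa [Function.comp_def] using
        (hfd (p + ((2 * Real.pi : ℝ), (0:ℝ), (0:ℝ)))).hasFDerivAt.comp p
          ((hasFDerivAt_id p).add_const ((2 * Real.pi : ℝ), (0:ℝ), (0:ℝ)))
    rw [hfp] at h1
    exact h1.fderiv
  have hG2pi : fderiv ℝ f ((2 * Real.pi : ℝ), k, l) = fderiv ℝ f ((0:ℝ), k, l) := by
    have hpt : ((0:ℝ), k, l) + ((2 * Real.pi : ℝ), (0:ℝ), (0:ℝ)) = ((2 * Real.pi : ℝ), k, l) := by
      simp [Prod.ext_iff]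
    have := (hDfper ((0:ℝ), k, l)).symm
    rwa [hpt] at this
  have hGper : Gf (2 * Real.pi) = Gf 0 := by
    simp only [hGdef]
    rw [hG2pi]
  -- continuity of the integrands
  have hcA : ∀ v : ℝ × ℝ × ℝ, Continuous fun t : ℝ => fderiv ℝ f (t, k, l) v := by
    intro v
    exact (hfc1.comp (by fun_prop)).clm_apply continuous_const
  have hcontIJ : Continuous fun t : ℝ =>
      ⟪JL (fderiv ℝ f (t, k, l) e1), fderiv ℝ f (t, k, l) e3⟫ :=
    (JL.continuous.comp (hcA e1)).inner (hcA e3)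
  have hcontIK : Continuous fun t : ℝ =>
      ⟪KL (fderiv ℝ f (t, k, l) e1), fderiv ℝ f (t, k, l) e2⟫ :=
    (KL.continuous.comp (hcA e1)).inner (hcA e2)
  -- the fundamental theorem of calculus
  have hFTC : ∫ t in (0:ℝ)..(2 * Real.pi),
      (⟪JL (fderiv ℝ f (t, k, l) e1), fderiv ℝ f (t, k, l) e3⟫
        - ⟪KL (fderiv ℝ f (t, k, l) e1), fderiv ℝ f (t, k, l) e2⟫)
      = Gf (2 * Real.pi) - Gf 0 := by
    apply intervalIntegral.integral_eq_sub_of_hasDerivAt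
    · intro t _
      have h := hgder t
      rwa [← hIJK t] at h
    · exact (hcontIJ.sub hcontIK).intervalIntegrable (μ := MeasureTheory.volume) _ _
  have hsplit := intervalIntegral.integral_sub
    (hcontIJ.intervalIntegrable (μ := MeasureTheory.volume) 0 (2 * Real.pi))
    (hcontIK.intervalIntegrable (μ := MeasureTheory.volume) 0 (2 * Real.pi))
  have hIJeq : (∫ t in (0:ℝ)..(2 * Real.pi),
        ⟪JL (fderiv ℝ f (t, k, l) e1), fderiv ℝ f (t, k, l) e3⟫)
      = ∫ t in (0:ℝ)..(2 * Real.pi),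
        ⟪KL (fderiv ℝ f (t, k, l) e1), fderiv ℝ f (t, k, l) e2⟫ := by
    have h := hFTC
    rw [hGper, sub_self, hsplit] at h
    linarith
  -- rewrite the goal integrands
  have hgoalJ : (∫ θ in (0:ℝ)..(2 * Real.pi),
        ⟪Matrix.toEuclideanLin J (deriv (fun θ' => Zh θ' k l) θ), deriv (fun l' => Zh θ k l') l⟫)
      = ∫ t in (0:ℝ)..(2 * Real.pi),
        ⟪JL (fderiv ℝ f (t, k, l) e1), fderiv ℝ f (t, k, l) e3⟫ := by
    apply intervalIntegral.integral_congr
    intro t _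
    simp only [(hθ t k l).deriv, (hl t k l).deriv, hJLapp]
  have hgoalK : (∫ θ in (0:ℝ)..(2 * Real.pi),
        ⟪Matrix.toEuclideanLin K (deriv (fun θ' => Zh θ' k l) θ), deriv (fun k' => Zh θ k' l) k⟫)
      = ∫ t in (0:ℝ)..(2 * Real.pi),
        ⟪KL (fderiv ℝ f (t, k, l) e1), fderiv ℝ f (t, k, l) e2⟫ := by
    apply intervalIntegral.integral_congr
    intro t _
    simp only [(hθ t k l).deriv, (hk t k l).deriv, hKLapp]
  rw [hgoalJ, hgoalK, hIJeq]
end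

section
/- Let V be a finite-dimensional real inner product space, let L : V → V be self-adjoint, let S : V → V be skew-adjoint, and suppose ξ₁, ξ₂, ξ₃ ∈ V satisfy the Jordan chain relations L ξ₁ = 0, L ξ₂ = S ξ₁, L ξ₃ = S ξ₂. Then ⟨ξ₁, S ξ₃⟩ = 0. Consequently, if moreover the kernel of L is spanned by ξ₁, then there exists ξ₄ ∈ V with L ξ₄ = S ξ₃; i.e., the twisted Jordan chain extends to length four. -/
open RealInnerProductSpace

theorem stmt11 (V : Type*) [NormedAddCommGroup V] [InnerProductSpace ℝ V]
    [FiniteDimensional ℝ V]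
    (L S : V →ₗ[ℝ] V)
    (hL : ∀ u v : V, ⟪L u, v⟫ = ⟪u, L v⟫)
    (hS : ∀ u v : V, ⟪S u, v⟫ = -⟪u, S v⟫)
    (ξ₁ ξ₂ ξ₃ : V)
    (h1 : L ξ₁ = 0) (h2 : L ξ₂ = S ξ₁) (h3 : L ξ₃ = S ξ₂) :
    ⟪ξ₁, S ξ₃⟫ = 0 ∧
      (LinearMap.ker L = Submodule.span ℝ {ξ₁} → ∃ ξ₄ : V, L ξ₄ = S ξ₃) := by
  have ha : ⟪ξ₂, S ξ₂⟫ = 0 := by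
    have := hS ξ₂ ξ₂
    have h' : ⟪S ξ₂, ξ₂⟫ = ⟪ξ₂, S ξ₂⟫ := real_inner_comm _ _
    linarith
  have key : ⟪ξ₁, S ξ₃⟫ = 0 := by
    have e1 : ⟪S ξ₁, ξ₃⟫ = -⟪ξ₁, S ξ₃⟫ := hS ξ₁ ξ₃
    have e2 : ⟪L ξ₂, ξ₃⟫ = ⟪ξ₂, L ξ₃⟫ := hL ξ₂ ξ₃
    rw [h2, h3] at e2
    linarith [e1, e2, ha]
  refine ⟨key, fun hker => ?_⟩
  have horth : (LinearMap.range L)ᗮ = LinearMap.ker L := by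
    ext x
    simp only [Submodule.mem_orthogonal, LinearMap.mem_range, LinearMap.mem_ker,
      forall_exists_index]
    constructor
    · intro h
      have hx : ⟪L x, L x⟫ = 0 := by
        rw [hL, real_inner_comm]
        exact h _ (L x) rfl
      exact inner_self_eq_zero.mp hx
    · intro hx u y hy
      subst hy
      rw [hL, hx, inner_zero_right]
  have hrange : LinearMap.range L = (Submodule.span ℝ {ξ₁})ᗮ := by
    rw [← hker, ← horth, Submodule.orthogonal_orthogonal]
  have hmem : S ξ₃ ∈ (Submodule.span ℝ {ξ₁})ᗮ := by
    rw [Submodule.mem_orthogonal]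
    intro u hu
    rcases Submodule.mem_span_singleton.mp hu with ⟨c, rfl⟩
    rw [real_inner_smul_left, key, mul_zero]
  rw [← hrange] at hmem
  exact hmem
end

section
/- Let k, l ∈ ℝ satisfy 1/3 < k² + l² < 1, and let C ∈ ℝ be any root of the characteristic quadratic for the real Ginzburg–Landau rolls, (1 − k² − 3l²)·C² − 4kl·C + (1 − 3k² − l²) = 0. Then k + C·l ≠ 0, and consequently the regularization coefficient 𝒦 = −(1 + C²)·(k + C·l)²/(1 − k² − l²) is strictly negative; i.e., the fourth-derivative term of the characteristic Cross–Newell equation is regularizing for the Ginzburg–Landau rolls throughout the annulus. -/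
theorem stmt16 (k l C : ℝ) (h1 : 1 / 3 < k ^ 2 + l ^ 2) (h2 : k ^ 2 + l ^ 2 < 1)
    (hC : (1 - k ^ 2 - 3 * l ^ 2) * C ^ 2 - 4 * k * l * C + (1 - 3 * k ^ 2 - l ^ 2) = 0) :
    k + C * l ≠ 0 ∧
      -(1 + C ^ 2) * (k + C * l) ^ 2 / (1 - k ^ 2 - l ^ 2) < 0 := by
  have key : (1 + C ^ 2) * (1 - k ^ 2 - l ^ 2) = 2 * (k + C * l) ^ 2 := by nlinarith [hC]
  have hpos : (0:ℝ) < 1 - k ^ 2 - l ^ 2 := by linarith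
  have hne : k + C * l ≠ 0 := by
    intro h
    nlinarith [sq_nonneg C, key, h]
  refine ⟨hne, ?_⟩
  apply div_neg_of_neg_of_pos _ hpos
  have := pow_pos (abs_pos.mpr hne) 2
  rw [sq_abs] at this
  nlinarith [sq_nonneg C]
end

section
/- Let Ψ : ℝ³ → ℂ be of class C², write u = (Re Ψ, Im Ψ) : ℝ³ → ℝ², and set p = u_x, r = u_y, Z = (u, p, r) : ℝ³ → ℝ⁶. Let M, J, K be the 6×6 block matrices M = diag(I₂, 0, 0), J = [[0, −I₂, 0],[I₂, 0, 0],[0, 0, 0]], K = [[0, 0, −I₂],[0, 0, 0],[I₂, 0, 0]], and let S(u,p,r) = ½‖u‖² + ½‖p‖² + ½‖r‖² − ¼‖u‖⁴. Then Ψ satisfies the real Ginzburg–Landau equation Ψ_t = Ψ_xx + Ψ_yy + Ψ − |Ψ|²Ψ at every point if and only if Z satisfies the multisymplectic system M·Z_t + J·Z_x + K·Z_y = ∇S(Z) at every point. -/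
open Matrix

/-- The matrix `M = diag(I₂, 0, 0)` of the multisymplectic formulation. -/
noncomputable def glM : Matrix (Fin 6) (Fin 6) ℝ :=
  !![1,0,0,0,0,0;
     0,1,0,0,0,0;
     0,0,0,0,0,0;
     0,0,0,0,0,0;
     0,0,0,0,0,0;
     0,0,0,0,0,0]

/-- The matrix `J = [[0, −I₂, 0],[I₂, 0, 0],[0, 0, 0]]`. -/
noncomputable def glJ : Matrix (Fin 6) (Fin 6) ℝ :=
  !![0,0,-1,0,0,0;
     0,0,0,-1,0,0;
     1,0,0,0,0,0;
     0,1,0,0,0,0;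
     0,0,0,0,0,0;
     0,0,0,0,0,0]

/-- The matrix `K = [[0, 0, −I₂],[0, 0, 0],[I₂, 0, 0]]`. -/
noncomputable def glK : Matrix (Fin 6) (Fin 6) ℝ :=
  !![0,0,0,0,-1,0;
     0,0,0,0,0,-1;
     0,0,0,0,0,0;
     0,0,0,0,0,0;
     1,0,0,0,0,0;
     0,1,0,0,0,0]

/-- `S(u,p,r) = ½‖u‖² + ½‖p‖² + ½‖r‖² − ¼‖u‖⁴` on `ℝ⁶ = (u,p,r)`. -/
noncomputable def glS : EuclideanSpace ℝ (Fin 6) → ℝ := fun Z =>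
  (1/2) * (Z 0 ^ 2 + Z 1 ^ 2) + (1/2) * (Z 2 ^ 2 + Z 3 ^ 2)
    + (1/2) * (Z 4 ^ 2 + Z 5 ^ 2) - (1/4) * (Z 0 ^ 2 + Z 1 ^ 2) ^ 2

/-- `Z = (u, p, r)` with `u = (Re Ψ, Im Ψ)`, `p = u_x`, `r = u_y`. -/
noncomputable def glZ (Ψ : ℝ → ℝ → ℝ → ℂ) (x y t : ℝ) : EuclideanSpace ℝ (Fin 6) :=
  (WithLp.equiv 2 (Fin 6 → ℝ)).symm
    ![(Ψ x y t).re, (Ψ x y t).im,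
      deriv (fun x' => (Ψ x' y t).re) x, deriv (fun x' => (Ψ x' y t).im) x,
      deriv (fun y' => (Ψ x y' t).re) y, deriv (fun y' => (Ψ x y' t).im) y]

section vec6aux
variable {α : Type*} (a b c d e f : α)
lemma vec6_0 : ![a,b,c,d,e,f] 0 = a := rfl
lemma vec6_1 : ![a,b,c,d,e,f] 1 = b := rfl
lemma vec6_2 : ![a,b,c,d,e,f] 2 = c := rfl
lemma vec6_3 : ![a,b,c,d,e,f] 3 = d := rfl
lemma vec6_4 : ![a,b,c,d,e,f] 4 = e := rfl
lemma vec6_5 : ![a,b,c,d,e,f] 5 = f := rfl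
lemma vec6_mk0 (h : 0 < 6) : ![a,b,c,d,e,f] ⟨0, h⟩ = a := rfl
lemma vec6_mk1 (h : 1 < 6) : ![a,b,c,d,e,f] ⟨1, h⟩ = b := rfl
lemma vec6_mk2 (h : 2 < 6) : ![a,b,c,d,e,f] ⟨2, h⟩ = c := rfl
lemma vec6_mk3 (h : 3 < 6) : ![a,b,c,d,e,f] ⟨3, h⟩ = d := rfl
lemma vec6_mk4 (h : 4 < 6) : ![a,b,c,d,e,f] ⟨4, h⟩ = e := rfl
lemma vec6_mk5 (h : 5 < 6) : ![a,b,c,d,e,f] ⟨5, h⟩ = f := rfl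
end vec6aux

lemma glS_grad (Z : EuclideanSpace ℝ (Fin 6)) :
    gradient glS Z = (WithLp.equiv 2 (Fin 6 → ℝ)).symm
      ![Z 0 - (Z 0 ^ 2 + Z 1 ^ 2) * Z 0, Z 1 - (Z 0 ^ 2 + Z 1 ^ 2) * Z 1,
        Z 2, Z 3, Z 4, Z 5] := by
  have hp : ∀ i : Fin 6, HasFDerivAt (𝕜 := ℝ) (fun Z : EuclideanSpace ℝ (Fin 6) => (Z i : ℝ))
      (EuclideanSpace.proj i) Z := by
    intro i
    exact (EuclideanSpace.proj i : EuclideanSpace ℝ (Fin 6) →L[ℝ] ℝ).hasFDerivAt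
  have h0 := hp 0; have h1 := hp 1; have h2 := hp 2
  have h3 := hp 3; have h4 := hp 4; have h5 := hp 5
  have hA := (h0.mul h0).add (h1.mul h1)
  have hB := (h2.mul h2).add (h3.mul h3)
  have hC := (h4.mul h4).add (h5.mul h5)
  have hS := (((hA.const_mul (1/2:ℝ)).add (hB.const_mul (1/2))).add
      (hC.const_mul (1/2))).sub ((hA.mul hA).const_mul (1/4))
  have hfun : glS = fun Z : EuclideanSpace ℝ (Fin 6) =>
      (1/2) * (Z 0 * Z 0 + Z 1 * Z 1) + (1/2) * (Z 2 * Z 2 + Z 3 * Z 3)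
      + (1/2) * (Z 4 * Z 4 + Z 5 * Z 5)
      - (1/4) * ((Z 0 * Z 0 + Z 1 * Z 1) * (Z 0 * Z 0 + Z 1 * Z 1)) := by
    funext W; simp only [glS]; ring
  have hgrad : HasGradientAt glS ((WithLp.equiv 2 (Fin 6 → ℝ)).symm
      ![Z 0 - (Z 0 ^ 2 + Z 1 ^ 2) * Z 0, Z 1 - (Z 0 ^ 2 + Z 1 ^ 2) * Z 1,
        Z 2, Z 3, Z 4, Z 5]) Z := by
    rw [hasGradientAt_iff_hasFDerivAt, hfun]
    refine hS.congr_fderiv ?_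
    ext v
    simp [InnerProductSpace.toDual_apply_apply, PiLp.inner_apply, RCLike.inner_apply,
      Fin.sum_univ_six, WithLp.equiv_symm_apply, PiLp.toLp_apply, ContinuousLinearMap.add_apply,
      ContinuousLinearMap.smul_apply, ContinuousLinearMap.sub_apply,
      vec6_0, vec6_1, vec6_2, vec6_3, vec6_4, vec6_5, smul_eq_mul]
    ring
  exact hgrad.gradient

section slices
variable {E : Type*} [NormedAddCommGroup E] [NormedSpace ℝ E]

lemma sliceX (g : ℝ × ℝ × ℝ → E) (x y t : ℝ) (hg : DifferentiableAt ℝ g (x, y, t)) :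
    HasDerivAt (fun x' => g (x', y, t)) (fderiv ℝ g (x, y, t) (1, 0, 0)) x := by
  have h1 : HasDerivAt (fun x' : ℝ => ((x' : ℝ), y, t)) ((1 : ℝ), (0 : ℝ), (0 : ℝ)) x :=
    HasDerivAt.prodMk (hasDerivAt_id' x) (HasDerivAt.prodMk (hasDerivAt_const x y) (hasDerivAt_const x t))
  exact hg.hasFDerivAt.comp_hasDerivAt _ h1

lemma sliceY (g : ℝ × ℝ × ℝ → E) (x y t : ℝ) (hg : DifferentiableAt ℝ g (x, y, t)) :
    HasDerivAt (fun y' => g (x, y', t)) (fderiv ℝ g (x, y, t) (0, 1, 0)) y := by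
  have h1 : HasDerivAt (fun y' : ℝ => ((x : ℝ), y', t)) ((0 : ℝ), (1 : ℝ), (0 : ℝ)) y :=
    HasDerivAt.prodMk (hasDerivAt_const y x) (HasDerivAt.prodMk (hasDerivAt_id' y) (hasDerivAt_const y t))
  exact hg.hasFDerivAt.comp_hasDerivAt _ h1

lemma sliceT (g : ℝ × ℝ × ℝ → E) (x y t : ℝ) (hg : DifferentiableAt ℝ g (x, y, t)) :
    HasDerivAt (fun t' => g (x, y, t')) (fderiv ℝ g (x, y, t) (0, 0, 1)) t := by
  have h1 : HasDerivAt (fun t' : ℝ => ((x : ℝ), y, t')) ((0 : ℝ), (0 : ℝ), (1 : ℝ)) t :=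
    HasDerivAt.prodMk (hasDerivAt_const t x) (HasDerivAt.prodMk (hasDerivAt_const t y) (hasDerivAt_id' t))
  exact hg.hasFDerivAt.comp_hasDerivAt _ h1

end slices

lemma hre {h : ℝ → ℂ} {c : ℂ} {s : ℝ} (hh : HasDerivAt h c s) :
    HasDerivAt (fun u => (h u).re) c.re s :=
  Complex.reCLM.hasFDerivAt.comp_hasDerivAt _ hh

lemma him {h : ℝ → ℂ} {c : ℂ} {s : ℝ} (hh : HasDerivAt h c s) :
    HasDerivAt (fun u => (h u).im) c.im s :=
  Complex.imCLM.hasFDerivAt.comp_hasDerivAt _ hh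

theorem stmt17 (Ψ : ℝ → ℝ → ℝ → ℂ)
    (hΨ : ContDiff ℝ 2 (fun p : ℝ × ℝ × ℝ => Ψ p.1 p.2.1 p.2.2)) :
    (∀ x y t : ℝ,
        deriv (fun t' => Ψ x y t') t =
          deriv (fun x' => deriv (fun x'' => Ψ x'' y t) x') x
          + deriv (fun y' => deriv (fun y'' => Ψ x y'' t) y') y
          + Ψ x y t - (‖Ψ x y t‖ : ℂ) ^ 2 * Ψ x y t) ↔
    (∀ x y t : ℝ,
        Matrix.toEuclideanLin glM (deriv (fun t' => glZ Ψ x y t') t)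
          + Matrix.toEuclideanLin glJ (deriv (fun x' => glZ Ψ x' y t) x)
          + Matrix.toEuclideanLin glK (deriv (fun y' => glZ Ψ x y' t) y)
          = gradient glS (glZ Ψ x y t)) := by
  set f : ℝ × ℝ × ℝ → ℂ := fun p => Ψ p.1 p.2.1 p.2.2 with hfdef
  have hfd : Differentiable ℝ f := hΨ.differentiable (by norm_num)
  have hfc : ContDiff ℝ 1 (fun q => fderiv ℝ f q) := hΨ.fderiv_right (by norm_num)
  set gx : ℝ × ℝ × ℝ → ℂ := fun q => fderiv ℝ f q (1, 0, 0) with hgxdef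
  set gy : ℝ × ℝ × ℝ → ℂ := fun q => fderiv ℝ f q (0, 1, 0) with hgydef
  set gt : ℝ × ℝ × ℝ → ℂ := fun q => fderiv ℝ f q (0, 0, 1) with hgtdef
  have hgxd : Differentiable ℝ gx := (hfc.clm_apply contDiff_const).differentiable one_ne_zero
  have hgyd : Differentiable ℝ gy := (hfc.clm_apply contDiff_const).differentiable one_ne_zero
  -- basic slice derivatives of Ψ
  have Hx : ∀ x y t, HasDerivAt (fun x'' => Ψ x'' y t) (gx (x, y, t)) x :=
    fun x y t => sliceX f x y t (hfd _)
  have Hy : ∀ x y t, HasDerivAt (fun y'' => Ψ x y'' t) (gy (x, y, t)) y :=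
    fun x y t => sliceY f x y t (hfd _)
  have Ht : ∀ x y t, HasDerivAt (fun t' => Ψ x y t') (gt (x, y, t)) t :=
    fun x y t => sliceT f x y t (hfd _)
  -- canonical form of glZ
  have hZ : ∀ x y t, glZ Ψ x y t = (WithLp.equiv 2 (Fin 6 → ℝ)).symm
      ![(Ψ x y t).re, (Ψ x y t).im, (gx (x,y,t)).re, (gx (x,y,t)).im,
        (gy (x,y,t)).re, (gy (x,y,t)).im] := by
    intro x y t
    have e2 : deriv (fun x' => (Ψ x' y t).re) x = (gx (x,y,t)).re := (hre (Hx x y t)).deriv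
    have e3 : deriv (fun x' => (Ψ x' y t).im) x = (gx (x,y,t)).im := (him (Hx x y t)).deriv
    have e4 : deriv (fun y' => (Ψ x y' t).re) y = (gy (x,y,t)).re := (hre (Hy x y t)).deriv
    have e5 : deriv (fun y' => (Ψ x y' t).im) y = (gy (x,y,t)).im := (him (Hy x y t)).deriv
    unfold glZ
    rw [e2, e3, e4, e5]
  refine forall_congr' fun x => forall_congr' fun y => forall_congr' fun t => ?_
  -- abbreviations at the point q = (x, y, t)
  set q : ℝ × ℝ × ℝ := (x, y, t) with hq
  set A : ℂ := fderiv ℝ gx q (1, 0, 0) with hA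
  set B : ℂ := fderiv ℝ gy q (0, 1, 0) with hB
  set z : ℂ := Ψ x y t with hz
  -- the derivative of glZ in each direction
  have hZt : HasDerivAt (fun t' => glZ Ψ x y t') ((WithLp.equiv 2 (Fin 6 → ℝ)).symm
      ![(gt q).re, (gt q).im, (fderiv ℝ gx q (0,0,1)).re, (fderiv ℝ gx q (0,0,1)).im,
        (fderiv ℝ gy q (0,0,1)).re, (fderiv ℝ gy q (0,0,1)).im]) t := by
    have h0 : HasDerivAt (fun t' => (Ψ x y t').re) ((gt q).re) t := hre (Ht x y t)
    have h1 : HasDerivAt (fun t' => (Ψ x y t').im) ((gt q).im) t := him (Ht x y t)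
    have hgx' : HasDerivAt (fun t' => gx (x, y, t')) (fderiv ℝ gx q (0,0,1)) t :=
      sliceT gx x y t (hgxd _)
    have hgy' : HasDerivAt (fun t' => gy (x, y, t')) (fderiv ℝ gy q (0,0,1)) t :=
      sliceT gy x y t (hgyd _)
    have h2 : HasDerivAt (fun t' => deriv (fun x'' => (Ψ x'' y t').re) x)
        ((fderiv ℝ gx q (0,0,1)).re) t := by
      have he : (fun t' => deriv (fun x'' => (Ψ x'' y t').re) x)
          = fun t' => (gx (x, y, t')).re := funext fun t' => (hre (Hx x y t')).deriv
      rw [he]; exact hre hgx'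
    have h3 : HasDerivAt (fun t' => deriv (fun x'' => (Ψ x'' y t').im) x)
        ((fderiv ℝ gx q (0,0,1)).im) t := by
      have he : (fun t' => deriv (fun x'' => (Ψ x'' y t').im) x)
          = fun t' => (gx (x, y, t')).im := funext fun t' => (him (Hx x y t')).deriv
      rw [he]; exact him hgx'
    have h4 : HasDerivAt (fun t' => deriv (fun y'' => (Ψ x y'' t').re) y)
        ((fderiv ℝ gy q (0,0,1)).re) t := by
      have he : (fun t' => deriv (fun y'' => (Ψ x y'' t').re) y)
          = fun t' => (gy (x, y, t')).re := funext fun t' => (hre (Hy x y t')).deriv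
      rw [he]; exact hre hgy'
    have h5 : HasDerivAt (fun t' => deriv (fun y'' => (Ψ x y'' t').im) y)
        ((fderiv ℝ gy q (0,0,1)).im) t := by
      have he : (fun t' => deriv (fun y'' => (Ψ x y'' t').im) y)
          = fun t' => (gy (x, y, t')).im := funext fun t' => (him (Hy x y t')).deriv
      rw [he]; exact him hgy'
    have hv : HasDerivAt (fun t' => (![(Ψ x y t').re, (Ψ x y t').im,
        deriv (fun x'' => (Ψ x'' y t').re) x, deriv (fun x'' => (Ψ x'' y t').im) x,
        deriv (fun y'' => (Ψ x y'' t').re) y, deriv (fun y'' => (Ψ x y'' t').im) y] : Fin 6 → ℝ))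
        (![(gt q).re, (gt q).im, (fderiv ℝ gx q (0,0,1)).re, (fderiv ℝ gx q (0,0,1)).im,
          (fderiv ℝ gy q (0,0,1)).re, (fderiv ℝ gy q (0,0,1)).im]) t := by
      rw [hasDerivAt_pi]
      intro i; fin_cases i
      · exact h0
      · exact h1
      · exact h2
      · exact h3
      · exact h4
      · exact h5
    exact ((PiLp.continuousLinearEquiv 2 ℝ (fun _ : Fin 6 => ℝ)).symm.toContinuousLinearMap
      |>.hasFDerivAt.comp_hasDerivAt _ hv)

  have hZx : HasDerivAt (fun x' => glZ Ψ x' y t) ((WithLp.equiv 2 (Fin 6 → ℝ)).symm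
      ![(gx q).re, (gx q).im, A.re, A.im,
        (fderiv ℝ gy q (1,0,0)).re, (fderiv ℝ gy q (1,0,0)).im]) x := by
    have hgx' : HasDerivAt (fun x' => gx (x', y, t)) A x := sliceX gx x y t (hgxd _)
    have hgy' : HasDerivAt (fun x' => gy (x', y, t)) (fderiv ℝ gy q (1,0,0)) x :=
      sliceX gy x y t (hgyd _)
    have h0 : HasDerivAt (fun x' => (Ψ x' y t).re) ((gx q).re) x := hre (Hx x y t)
    have h1 : HasDerivAt (fun x' => (Ψ x' y t).im) ((gx q).im) x := him (Hx x y t)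
    have h2 : HasDerivAt (fun x' => deriv (fun x'' => (Ψ x'' y t).re) x') (A.re) x := by
      have he : (fun x' => deriv (fun x'' => (Ψ x'' y t).re) x')
          = fun x' => (gx (x', y, t)).re := funext fun x' => (hre (Hx x' y t)).deriv
      rw [he]; exact hre hgx'
    have h3 : HasDerivAt (fun x' => deriv (fun x'' => (Ψ x'' y t).im) x') (A.im) x := by
      have he : (fun x' => deriv (fun x'' => (Ψ x'' y t).im) x')
          = fun x' => (gx (x', y, t)).im := funext fun x' => (him (Hx x' y t)).deriv
      rw [he]; exact him hgx'
    have h4 : HasDerivAt (fun x' => deriv (fun y'' => (Ψ x' y'' t).re) y)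
        ((fderiv ℝ gy q (1,0,0)).re) x := by
      have he : (fun x' => deriv (fun y'' => (Ψ x' y'' t).re) y)
          = fun x' => (gy (x', y, t)).re := funext fun x' => (hre (Hy x' y t)).deriv
      rw [he]; exact hre hgy'
    have h5 : HasDerivAt (fun x' => deriv (fun y'' => (Ψ x' y'' t).im) y)
        ((fderiv ℝ gy q (1,0,0)).im) x := by
      have he : (fun x' => deriv (fun y'' => (Ψ x' y'' t).im) y)
          = fun x' => (gy (x', y, t)).im := funext fun x' => (him (Hy x' y t)).deriv
      rw [he]; exact him hgy'
    have hv : HasDerivAt (fun x' => (![(Ψ x' y t).re, (Ψ x' y t).im,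
        deriv (fun x'' => (Ψ x'' y t).re) x', deriv (fun x'' => (Ψ x'' y t).im) x',
        deriv (fun y'' => (Ψ x' y'' t).re) y, deriv (fun y'' => (Ψ x' y'' t).im) y] : Fin 6 → ℝ))
        (![(gx q).re, (gx q).im, A.re, A.im,
          (fderiv ℝ gy q (1,0,0)).re, (fderiv ℝ gy q (1,0,0)).im]) x := by
      rw [hasDerivAt_pi]
      intro i; fin_cases i
      · exact h0
      · exact h1
      · exact h2
      · exact h3
      · exact h4
      · exact h5
    exact ((PiLp.continuousLinearEquiv 2 ℝ (fun _ : Fin 6 => ℝ)).symm.toContinuousLinearMap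
      |>.hasFDerivAt.comp_hasDerivAt _ hv)
  have hZy : HasDerivAt (fun y' => glZ Ψ x y' t) ((WithLp.equiv 2 (Fin 6 → ℝ)).symm
      ![(gy q).re, (gy q).im, (fderiv ℝ gx q (0,1,0)).re, (fderiv ℝ gx q (0,1,0)).im,
        B.re, B.im]) y := by
    have hgx' : HasDerivAt (fun y' => gx (x, y', t)) (fderiv ℝ gx q (0,1,0)) y :=
      sliceY gx x y t (hgxd _)
    have hgy' : HasDerivAt (fun y' => gy (x, y', t)) B y := sliceY gy x y t (hgyd _)
    have h0 : HasDerivAt (fun y' => (Ψ x y' t).re) ((gy q).re) y := hre (Hy x y t)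
    have h1 : HasDerivAt (fun y' => (Ψ x y' t).im) ((gy q).im) y := him (Hy x y t)
    have h2 : HasDerivAt (fun y' => deriv (fun x'' => (Ψ x'' y' t).re) x)
        ((fderiv ℝ gx q (0,1,0)).re) y := by
      have he : (fun y' => deriv (fun x'' => (Ψ x'' y' t).re) x)
          = fun y' => (gx (x, y', t)).re := funext fun y' => (hre (Hx x y' t)).deriv
      rw [he]; exact hre hgx'
    have h3 : HasDerivAt (fun y' => deriv (fun x'' => (Ψ x'' y' t).im) x)
        ((fderiv ℝ gx q (0,1,0)).im) y := by
      have he : (fun y' => deriv (fun x'' => (Ψ x'' y' t).im) x)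
          = fun y' => (gx (x, y', t)).im := funext fun y' => (him (Hx x y' t)).deriv
      rw [he]; exact him hgx'
    have h4 : HasDerivAt (fun y' => deriv (fun y'' => (Ψ x y'' t).re) y') (B.re) y := by
      have he : (fun y' => deriv (fun y'' => (Ψ x y'' t).re) y')
          = fun y' => (gy (x, y', t)).re := funext fun y' => (hre (Hy x y' t)).deriv
      rw [he]; exact hre hgy'
    have h5 : HasDerivAt (fun y' => deriv (fun y'' => (Ψ x y'' t).im) y') (B.im) y := by
      have he : (fun y' => deriv (fun y'' => (Ψ x y'' t).im) y')
          = fun y' => (gy (x, y', t)).im := funext fun y' => (him (Hy x y' t)).deriv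
      rw [he]; exact him hgy'
    have hv : HasDerivAt (fun y' => (![(Ψ x y' t).re, (Ψ x y' t).im,
        deriv (fun x'' => (Ψ x'' y' t).re) x, deriv (fun x'' => (Ψ x'' y' t).im) x,
        deriv (fun y'' => (Ψ x y'' t).re) y', deriv (fun y'' => (Ψ x y'' t).im) y'] : Fin 6 → ℝ))
        (![(gy q).re, (gy q).im, (fderiv ℝ gx q (0,1,0)).re, (fderiv ℝ gx q (0,1,0)).im,
          B.re, B.im]) y := by
      rw [hasDerivAt_pi]
      intro i; fin_cases i
      · exact h0
      · exact h1
      · exact h2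
      · exact h3
      · exact h4
      · exact h5
    exact ((PiLp.continuousLinearEquiv 2 ℝ (fun _ : Fin 6 => ℝ)).symm.toContinuousLinearMap
      |>.hasFDerivAt.comp_hasDerivAt _ hv)
  -- rewrite the complex equation
  have ec1 : deriv (fun t' => Ψ x y t') t = gt q := (Ht x y t).deriv
  have ec2 : deriv (fun x' => deriv (fun x'' => Ψ x'' y t) x') x = A := by
    have he : (fun x' => deriv (fun x'' => Ψ x'' y t) x') = fun x' => gx (x', y, t) :=
      funext fun x' => (Hx x' y t).deriv
    rw [he]; exact (sliceX gx x y t (hgxd _)).deriv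
  have ec3 : deriv (fun y' => deriv (fun y'' => Ψ x y'' t) y') y = B := by
    have he : (fun y' => deriv (fun y'' => Ψ x y'' t) y') = fun y' => gy (x, y', t) :=
      funext fun y' => (Hy x y' t).deriv
    rw [he]; exact (sliceY gy x y t (hgyd _)).deriv
  have habs : ((‖z‖ : ℂ)) ^ 2 = ((z.re ^ 2 + z.im ^ 2 : ℝ) : ℂ) := by
    norm_cast
    rw [Complex.sq_norm, Complex.normSq_apply]; ring
  have hadd : ∀ a b : Fin 6 → ℝ, WithLp.toLp 2 a
      + WithLp.toLp 2 b = WithLp.toLp 2 (a + b) :=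
    fun a b => rfl
  rw [ec1, ec2, ec3, habs, hZt.deriv, hZx.deriv, hZy.deriv, hZ x y t, glS_grad, WithLp.equiv_symm_apply,
    Matrix.toEuclideanLin_toLp, Matrix.toEuclideanLin_toLp,
    Matrix.toEuclideanLin_toLp, hadd, hadd, (WithLp.toLp_injective (p := 2)).eq_iff, funext_iff,
    Complex.ext_iff]
  simp only [PiLp.toLp_apply, vec6_0, vec6_1, vec6_2, vec6_3, vec6_4, vec6_5,
    Complex.add_re, Complex.add_im, Complex.sub_re, Complex.sub_im, Complex.re_ofReal_mul,
    Complex.im_ofReal_mul]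
  constructor
  · rintro ⟨h1, h2⟩ i
    fin_cases i
    · simp only [glM, glJ, glK, Matrix.toLin'_apply, Matrix.mulVec, dotProduct,
        Fin.sum_univ_six, Matrix.of_apply, Pi.add_apply,
        vec6_mk0, vec6_mk1, vec6_mk2, vec6_mk3, vec6_mk4, vec6_mk5,
        vec6_0, vec6_1, vec6_2, vec6_3, vec6_4, vec6_5,
        mul_one, mul_zero, one_mul, zero_mul, add_zero, zero_add]; linear_combination h1
    · simp only [glM, glJ, glK, Matrix.toLin'_apply, Matrix.mulVec, dotProduct,
        Fin.sum_univ_six, Matrix.of_apply, Pi.add_apply,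
        vec6_mk0, vec6_mk1, vec6_mk2, vec6_mk3, vec6_mk4, vec6_mk5,
        vec6_0, vec6_1, vec6_2, vec6_3, vec6_4, vec6_5,
        mul_one, mul_zero, one_mul, zero_mul, add_zero, zero_add]; linear_combination h2
    · simp only [glM, glJ, glK, Matrix.toLin'_apply, Matrix.mulVec, dotProduct,
        Fin.sum_univ_six, Matrix.of_apply, Pi.add_apply,
        vec6_mk0, vec6_mk1, vec6_mk2, vec6_mk3, vec6_mk4, vec6_mk5,
        vec6_0, vec6_1, vec6_2, vec6_3, vec6_4, vec6_5,
        mul_one, mul_zero, one_mul, zero_mul, add_zero, zero_add]; rfl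
    · simp only [glM, glJ, glK, Matrix.toLin'_apply, Matrix.mulVec, dotProduct,
        Fin.sum_univ_six, Matrix.of_apply, Pi.add_apply,
        vec6_mk0, vec6_mk1, vec6_mk2, vec6_mk3, vec6_mk4, vec6_mk5,
        vec6_0, vec6_1, vec6_2, vec6_3, vec6_4, vec6_5,
        mul_one, mul_zero, one_mul, zero_mul, add_zero, zero_add]; rfl
    · simp only [glM, glJ, glK, Matrix.toLin'_apply, Matrix.mulVec, dotProduct,
        Fin.sum_univ_six, Matrix.of_apply, Pi.add_apply,
        vec6_mk0, vec6_mk1, vec6_mk2, vec6_mk3, vec6_mk4, vec6_mk5,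
        vec6_0, vec6_1, vec6_2, vec6_3, vec6_4, vec6_5,
        mul_one, mul_zero, one_mul, zero_mul, add_zero, zero_add]; rfl
    · simp only [glM, glJ, glK, Matrix.toLin'_apply, Matrix.mulVec, dotProduct,
        Fin.sum_univ_six, Matrix.of_apply, Pi.add_apply,
        vec6_mk0, vec6_mk1, vec6_mk2, vec6_mk3, vec6_mk4, vec6_mk5,
        vec6_0, vec6_1, vec6_2, vec6_3, vec6_4, vec6_5,
        mul_one, mul_zero, one_mul, zero_mul, add_zero, zero_add]; rfl
  · intro h
    constructor
    · have h0 := h 0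
      simp only [glM, glJ, glK, Matrix.toLin'_apply, Matrix.mulVec, dotProduct,
        Fin.sum_univ_six, Matrix.of_apply, Pi.add_apply,
        vec6_mk0, vec6_mk1, vec6_mk2, vec6_mk3, vec6_mk4, vec6_mk5,
        vec6_0, vec6_1, vec6_2, vec6_3, vec6_4, vec6_5,
        mul_one, mul_zero, one_mul, zero_mul, add_zero, zero_add] at h0
      linear_combination h0
    · have h1 := h 1
      simp only [glM, glJ, glK, Matrix.toLin'_apply, Matrix.mulVec, dotProduct,
        Fin.sum_univ_six, Matrix.of_apply, Pi.add_apply,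
        vec6_mk0, vec6_mk1, vec6_mk2, vec6_mk3, vec6_mk4, vec6_mk5,
        vec6_0, vec6_1, vec6_2, vec6_3, vec6_4, vec6_5,
        mul_one, mul_zero, one_mul, zero_mul, add_zero, zero_add] at h1
      linear_combination h1
end
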